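/- The TPM GCM satisfies Transaction Bundling: for any makespan function v satisfying monotonicity under bundling (S2), any finite set T, and transactions tx1, tx2, tx3 not in T with tx3 the concatenation of tx1 and tx2, it holds that gas^TPM_{T∪{tx1,tx2}}(tx1) + gas^TPM_{T∪{tx1,tx2}}(tx2) ≤ gas^TPM_{T∪{tx3}}(tx3). -/

import Mathlib

/-- The Time-Proportional Makespan (TPM) GCM:
`gas^TPM_T(tx) = (t(tx)/Σ_{tx'∈T} t(tx')) · v(T)`. -/
noncomputable def tpmGas {Tx : Type} [DecidableEq Tx]
    (t : Tx → ℝ) (v : Finset Tx → ℝ) (T : Finset Tx) (tx : Tx) : ℝ :=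
  (t tx / ∑ tx' ∈ T, t tx') * v T

/-- The TPM GCM satisfies Transaction Bundling: for any
nonnegative makespan function `v` satisfying monotonicity under bundling (S2),
any finite set `T`, and transactions `tx1, tx2, tx3 ∉ T` with `tx3` the
concatenation of `tx1` and `tx2`,
`gas^TPM_{T∪{tx1,tx2}}(tx1) + gas^TPM_{T∪{tx1,tx2}}(tx2) ≤ gas^TPM_{T∪{tx3}}(tx3)`. -/
theorem tpmGas_transaction_bundling
    {Key Tx : Type} [DecidableEq Key] [DecidableEq Tx]
    (t : Tx → ℝ) (keys : Tx → Finset Key)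
    (htpos : ∀ tx, 0 < t tx) (hKne : ∀ tx, (keys tx).Nonempty)
    (v : Finset Tx → ℝ) (hvnonneg : ∀ S, 0 ≤ v S)
    -- (S2) monotonicity under bundling
    (hS2 : ∀ (T : Finset Tx) (a b c : Tx), a ∉ T → b ∉ T → c ∉ T → a ≠ b →
      t c = t a + t b → keys c = keys a ∪ keys b →
      v (insert a (insert b T)) ≤ v (insert c T))
    (T : Finset Tx) (tx1 tx2 tx3 : Tx)
    (h1 : tx1 ∉ T) (h2 : tx2 ∉ T) (h3 : tx3 ∉ T) (h12 : tx1 ≠ tx2)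
    -- tx3 is the concatenation of tx1 and tx2
    (hconcT : t tx3 = t tx1 + t tx2) (hconcK : keys tx3 = keys tx1 ∪ keys tx2) :
    tpmGas t v (insert tx1 (insert tx2 T)) tx1
        + tpmGas t v (insert tx1 (insert tx2 T)) tx2
      ≤ tpmGas t v (insert tx3 T) tx3 := by
  have hST : (0:ℝ) ≤ ∑ tx' ∈ T, t tx' :=
    Finset.sum_nonneg fun x _ => (htpos x).le
  have hsum1 : ∑ tx' ∈ insert tx1 (insert tx2 T), t tx'
      = t tx1 + t tx2 + ∑ tx' ∈ T, t tx' := by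
    rw [Finset.sum_insert (by simp [h1, h12]), Finset.sum_insert h2]; ring
  have hsum3 : ∑ tx' ∈ insert tx3 T, t tx' = t tx1 + t tx2 + ∑ tx' ∈ T, t tx' := by
    rw [Finset.sum_insert h3, hconcT]
  have hv := hS2 T tx1 tx2 tx3 h1 h2 h3 h12 hconcT hconcK
  have hpos : (0:ℝ) < t tx1 + t tx2 + ∑ tx' ∈ T, t tx' := by
    have := htpos tx1; have := htpos tx2; linarith
  simp only [tpmGas, hsum1, hsum3, hconcT]
  rw [div_mul_eq_mul_div, div_mul_eq_mul_div, ← add_div, ← add_mul,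
    ← div_mul_eq_mul_div]
  exact mul_le_mul_of_nonneg_left hv (div_nonneg (by have := htpos tx1; have := htpos tx2; linarith) hpos.le)
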